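/- One has d_{S,k,Λ}((x,g),(y,h)) < 1 if and only if g = h and Λ·d_X(x,y) < 1, and in this case d_{S,k,Λ}((x,g),(y,h)) = Λ·d_X(x,y). Consequently, the topology induced by d_{S,k,Λ} on X × G is the product topology of the d_X-topology on X and the discrete topology on G. -/
import Mathlib


open scoped ENNReal

structure HomotopyCoherentAction (G : Type*) [Group G] (X : Type*) [TopologicalSpace X] where
  Γ : List (G × unitInterval) → G → X → X
  continuous' : ∀ (k : ℕ) (γ : Fin k → G) (γ₀ : G),
    Continuous fun p : (Fin k → unitInterval) × X =>
      Γ (List.ofFn fun i => (γ i, p.1 i)) γ₀ p.2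
  split : ∀ (L₁ L₂ : List (G × unitInterval)) (γ γ₀ : G) (x : X),
    Γ (L₁ ++ (γ, 0) :: L₂) γ₀ x = Γ L₁ γ (Γ L₂ γ₀ x)
  mul_mid : ∀ (L₁ L₂ : List (G × unitInterval)) (γ γ' : G) (t : unitInterval) (γ₀ : G) (x : X),
    Γ (L₁ ++ (γ, 1) :: (γ', t) :: L₂) γ₀ x = Γ (L₁ ++ (γ * γ', t) :: L₂) γ₀ x
  mul_last : ∀ (L₁ : List (G × unitInterval)) (γ γ₀ : G) (x : X),
    Γ (L₁ ++ [(γ, 1)]) γ₀ x = Γ L₁ (γ * γ₀) x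
  base_one : ∀ (L : List (G × unitInterval)) (γ₁ : G) (t₁ : unitInterval) (x : X),
    Γ (L ++ [(γ₁, t₁)]) 1 x = Γ L γ₁ x
  unit_mid : ∀ (L₁ L₂ : List (G × unitInterval)) (γ' : G) (t' t : unitInterval) (γ₀ : G) (x : X),
    Γ (L₁ ++ (γ', t') :: (1, t) :: L₂) γ₀ x = Γ (L₁ ++ (γ', t' * t) :: L₂) γ₀ x
  unit_head : ∀ (L : List (G × unitInterval)) (t : unitInterval) (γ₀ : G) (x : X),
    Γ ((1, t) :: L) γ₀ x = Γ L γ₀ x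
  unit_nil : ∀ x : X, Γ [] 1 x = x

variable {G : Type*} [Group G] {X : Type*}

/-- `Γ(r_k, t_k, …, r_1, t_1, r_0, z)` for `r : Fin (k+1) → G`, `t : Fin k → [0,1]`. -/
def gammaWord [TopologicalSpace X] (A : HomotopyCoherentAction G X) {k : ℕ}
    (r : Fin (k + 1) → G) (t : Fin k → unitInterval) (z : X) : X :=
  A.Γ ((List.ofFn fun j : Fin k => (r j.succ, t j)).reverse) (r 0) z

/-- The condition that the data `(xs, zs, a, b)` forms an admissible chain from `(x,g)` to
`(y,h)` in the definition of the extended metric `d_{S,k,Λ}`. -/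
def ChainCond [MetricSpace X] (A : HomotopyCoherentAction G X) (S : Set G) (k : ℕ)
    (x y : X) (g h : G) {l : ℕ} (xs zs : Fin (l + 1) → X) (a b : Fin l → G) : Prop :=
  xs 0 = x ∧ zs (Fin.last l) = y ∧
  g * (List.ofFn fun i : Fin l => (a i)⁻¹ * b i).prod = h ∧
  ∀ i : Fin l, ∃ (r s : Fin (k + 1) → G) (t u : Fin k → unitInterval),
    (∀ j, r j ∈ S) ∧ (∀ j, s j ∈ S) ∧
    a i = (List.ofFn r).reverse.prod ∧ b i = (List.ofFn s).reverse.prod ∧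
    gammaWord A r t (zs i.castSucc) = gammaWord A s u (xs i.succ)

/-- The extended metric `d_{S,k,Λ}` on `X × G`. -/
noncomputable def coherentDist [MetricSpace X] (A : HomotopyCoherentAction G X)
    (S : Set G) (k : ℕ) (Λ : ℝ) (p q : X × G) : ℝ≥0∞ :=
  ⨅ (l : ℕ) (xs : Fin (l + 1) → X) (zs : Fin (l + 1) → X) (a : Fin l → G) (b : Fin l → G)
    (_ : ChainCond A S k p.1 q.1 p.2 q.2 xs zs a b),
      (l : ℝ≥0∞) + ∑ i : Fin (l + 1), ENNReal.ofReal (Λ * dist (xs i) (zs i))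

theorem coherentDist_le_aux [MetricSpace X] (A : HomotopyCoherentAction G X)
    (S : Set G) (k : ℕ) (Λ : ℝ) (x y : X) (g : G) :
    coherentDist A S k Λ (x, g) (y, g) ≤ ENNReal.ofReal (Λ * dist x y) := by
  have hc : ChainCond A S k x y g g (fun _ : Fin 1 => x) (fun _ : Fin 1 => y)
      Fin.elim0 Fin.elim0 := by
    refine ⟨rfl, rfl, by simp, fun i => i.elim0⟩
  have h : coherentDist A S k Λ (x, g) (y, g) ≤
      ((0 : ℕ) : ℝ≥0∞) + ∑ i : Fin 1, ENNReal.ofReal (Λ * dist x y) := by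
    rw [coherentDist]
    refine le_trans (iInf_le _ 0) ?_
    refine le_trans (iInf_le _ (fun _ : Fin 1 => x)) ?_
    refine le_trans (iInf_le _ (fun _ : Fin 1 => y)) ?_
    refine le_trans (iInf_le _ Fin.elim0) ?_
    refine le_trans (iInf_le _ Fin.elim0) ?_
    exact iInf_le _ hc
  simpa using h

theorem coherentDist_lt_aux [MetricSpace X] (A : HomotopyCoherentAction G X)
    (S : Set G) (k : ℕ) (Λ : ℝ) (x y : X) (g h : G) (c : ℝ≥0∞) (hc : c ≤ 1)
    (hd : coherentDist A S k Λ (x, g) (y, h) < c) :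
    g = h ∧ ENNReal.ofReal (Λ * dist x y) < c := by
  rw [coherentDist] at hd
  simp only [iInf_lt_iff] at hd
  obtain ⟨l, xs, zs, a, b, hcond, hval⟩ := hd
  rcases Nat.eq_zero_or_pos l with hl | hl
  · subst hl
    obtain ⟨hx0, hzl, hg, -⟩ := hcond
    have hg' : g = h := by simpa using hg
    have hz0 : zs 0 = y := by simpa using hzl
    refine ⟨hg', ?_⟩
    have : ((0 : ℕ) : ℝ≥0∞) + ∑ i : Fin 1, ENNReal.ofReal (Λ * dist (xs i) (zs i)) < c := hval
    simpa [hx0, hz0] using this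
  · exfalso
    have h1 : (1 : ℝ≥0∞) ≤ (l : ℝ≥0∞) := by exact_mod_cast hl
    have : (1 : ℝ≥0∞) ≤ (l : ℝ≥0∞) + ∑ i : Fin (l + 1), ENNReal.ofReal (Λ * dist (xs i) (zs i)) :=
      le_trans h1 le_self_add
    exact absurd ((lt_of_le_of_lt this hval).trans_le hc) (lt_irrefl 1)


/-- `d_{S,k,Λ}((x,g),(y,h)) < 1` iff `g = h` and `Λ · d_X(x,y) < 1`, in which case it
equals `Λ · d_X(x,y)`; consequently the topology induced by `d_{S,k,Λ}` on `X × G` is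
the product of the metric topology on `X` with the discrete topology on `G`. -/
theorem coherentDist_lt_one {G : Type*} [Group G] {X : Type*} [MetricSpace X]
    (A : HomotopyCoherentAction G X) (S : Set G) (hSfin : S.Finite) (hS1 : (1 : G) ∈ S)
    (k : ℕ) (Λ : ℝ) (hΛ : 0 < Λ) :
    (∀ (x y : X) (g h : G),
      coherentDist A S k Λ (x, g) (y, h) < 1 ↔ g = h ∧ Λ * dist x y < 1) ∧
    (∀ (x y : X) (g h : G), coherentDist A S k Λ (x, g) (y, h) < 1 →
      coherentDist A S k Λ (x, g) (y, h) = ENNReal.ofReal (Λ * dist x y)) ∧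
    (∀ U : Set (X × G),
      (∀ p ∈ U, ∃ ε : ℝ, 0 < ε ∧
        {q : X × G | coherentDist A S k Λ p q < ENNReal.ofReal ε} ⊆ U) ↔
      @IsOpen (X × G) (@instTopologicalSpaceProd X G _ ⊥) U) := by
  have key : ∀ (x y : X) (g h : G),
      coherentDist A S k Λ (x, g) (y, h) < 1 ↔ g = h ∧ Λ * dist x y < 1 := by
    intro x y g h
    constructor
    · intro hd
      obtain ⟨hgh, hlt⟩ := coherentDist_lt_aux A S k Λ x y g h 1 le_rfl hd
      exact ⟨hgh, ENNReal.ofReal_lt_one.mp hlt⟩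
    · rintro ⟨rfl, hlt⟩
      exact lt_of_le_of_lt (coherentDist_le_aux A S k Λ x y g)
        (ENNReal.ofReal_lt_one.mpr hlt)
  have keq : ∀ (x y : X) (g h : G), coherentDist A S k Λ (x, g) (y, h) < 1 →
      coherentDist A S k Λ (x, g) (y, h) = ENNReal.ofReal (Λ * dist x y) := by
    intro x y g h hd
    obtain ⟨rfl, hlt1⟩ := (key x y g h).mp hd
    refine le_antisymm (coherentDist_le_aux A S k Λ x y g) (le_of_not_gt fun hlt => ?_)
    have h1 : ENNReal.ofReal (Λ * dist x y) ≤ 1 := (ENNReal.ofReal_lt_one.mpr hlt1).le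
    obtain ⟨-, habs⟩ := coherentDist_lt_aux A S k Λ x y g g _ h1 hlt
    exact lt_irrefl _ habs
  refine ⟨key, keq, fun U => ?_⟩
  letI : TopologicalSpace G := ⊥
  haveI : DiscreteTopology G := ⟨rfl⟩
  constructor
  · intro hU
    have hslice : ∀ g : G, IsOpen {x : X | (x, g) ∈ U} := by
      intro g
      rw [Metric.isOpen_iff]
      intro x hx
      obtain ⟨ε, hε, hball⟩ := hU (x, g) hx
      refine ⟨min ε 1 / Λ, div_pos (lt_min hε one_pos) hΛ, fun y hy => ?_⟩
      have hdy : Λ * dist x y < min ε 1 := by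
        rw [Metric.mem_ball] at hy
        rw [dist_comm] at hy
        calc Λ * dist x y < Λ * (min ε 1 / Λ) := by
              exact mul_lt_mul_of_pos_left hy hΛ
          _ = min ε 1 := by field_simp
      have : coherentDist A S k Λ (x, g) (y, g) < ENNReal.ofReal ε :=
        lt_of_le_of_lt (coherentDist_le_aux A S k Λ x y g)
          (lt_of_lt_of_le
            ((ENNReal.ofReal_lt_ofReal_iff (lt_min hε one_pos)).mpr hdy)
            (ENNReal.ofReal_le_ofReal (min_le_left _ _)))
      exact hball this
    have : U = ⋃ g : G, {x : X | (x, g) ∈ U} ×ˢ ({g} : Set G) := by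
      ext ⟨y, h⟩
      simp only [Set.mem_iUnion, Set.mem_prod, Set.mem_singleton_iff, Set.mem_setOf_eq]
      constructor
      · intro hy; exact ⟨h, hy, rfl⟩
      · rintro ⟨g, hg, rfl⟩; exact hg
    rw [this]
    exact isOpen_iUnion fun g => (hslice g).prod (isOpen_discrete _)
  · intro hU p hp
    obtain ⟨x, g⟩ := p
    have hslice : IsOpen {x : X | (x, g) ∈ U} :=
      hU.preimage (Continuous.prodMk continuous_id continuous_const)
    rw [Metric.isOpen_iff] at hslice
    obtain ⟨δ, hδ, hball⟩ := hslice x hp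
    refine ⟨min (Λ * δ) 1, lt_min (mul_pos hΛ hδ) one_pos, ?_⟩
    rintro ⟨y, h⟩ hq
    simp only [Set.mem_setOf_eq] at hq
    have hle1 : ENNReal.ofReal (min (Λ * δ) 1) ≤ 1 :=
      ENNReal.ofReal_le_one.mpr (min_le_right _ _)
    have hd1 : coherentDist A S k Λ (x, g) (y, h) < 1 := lt_of_lt_of_le hq hle1
    obtain ⟨rfl, -⟩ := (key x y g h).mp hd1
    have heq := keq x y g g hd1
    rw [heq] at hq
    have hlt : Λ * dist x y < min (Λ * δ) 1 :=
      (ENNReal.ofReal_lt_ofReal_iff_of_nonneg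
        (mul_nonneg hΛ.le dist_nonneg)).mp hq
    have hxy : dist x y < δ := by
      have : Λ * dist x y < Λ * δ := lt_of_lt_of_le hlt (min_le_left _ _)
      exact lt_of_mul_lt_mul_left this hΛ.le
    have : y ∈ Metric.ball x δ := by rwa [Metric.mem_ball, dist_comm]
    exact hball this
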